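/- Let A = A₀ ⊕ A₁ be a ℤ/2-graded commutative ring, X a set, P : X² → A₀ symmetric, G : X² → A₀, S : X² → A₀ antisymmetric, F : X² → A₁, and in addition λ_I, ω_I : X → A₀ and ω̂_I : X → A₁ for indices I in some index set. Define Π^{(n+2)} and Π_F^{(n+2)} by the linear chain formulas, and set Π_I^{(n+2)}(r;t_1,…,t_n;s) := λ_I(r)·G^{n+1}(r,t_1,…,t_n,s) + ω_I(r)·Π^{(n+2)}(r;t_1,…,t_n;s) − ω̂_I(r)·Π_F^{(n+2)}(r;t_1,…,t_n;s), and Π_{IJ}^{(n+2)}(r;t_1,…,t_n;s) := Π_I^{(n+2)}(r;t_1,…,t_n;s)·ω_J(s) + (−1)^n ω_I(r)·Π_J^{(n+2)}(s;t_n,…,t_1;r) − ω_I(r)·Π^{(n+2)}(r;t_1,…,t_n;s)·ω_J(s) + ω̂_I(r)·S^{n+1}(r,t_1,…,t_n,s)·ω̂_J(s). Then Π_{IJ}^{(n+2)}(r;t_1,…,t_n;s) = (−1)^n Π_{JI}^{(n+2)}(s;t_n,…,t_1;r). -/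
import Mathlib


/-- Ordered path product `f(x₀,x₁) f(x₁,x₂) ⋯ f(x_{k−1},x_k)` starting at `x`
through the list of subsequent points; the empty product is `1`. -/
def pathProd {A X : Type*} [Monoid A] (f : X → X → A) : X → List X → A
  | _, [] => 1
  | x, y :: l => f x y * pathProd f y l

/-- The fundamental linear chain block
`Π^{(n+2)}(r;t₁,…,tₙ;s) = ∑_{α=0}^{n} (−1)^α G^α(t_α,…,t₁,r) P(t_α,t_{α+1}) G^{n−α}(t_{α+1},…,tₙ,s)
 − ∑_{α=0}^{n−1} ∑_{β=0}^{n−1−α} (−1)^α G^α(t_α,…,t₁,r) F(t_{α+1},t_α)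
   S^β(t_{α+1},…,t_{α+β+1}) F(t_{α+β+1},t_{α+β+2}) G^{n−1−α−β}(t_{α+β+2},…,tₙ,s)`,
with `t₀ := r`, `t_{n+1} := s`. -/
def PiBlock {A X : Type*} [Ring A] (P G S F : X → X → A)
    (r : X) (ts : List X) (s : X) : A :=
  let n := ts.length
  let pt : ℕ → X := fun i => (r :: (ts ++ [s])).getD i s
  (∑ α ∈ Finset.range (n + 1),
      (-1 : A) ^ α * pathProd G (pt α) ((List.range α).reverse.map pt)
        * P (pt α) (pt (α + 1))
        * pathProd G (pt (α + 1)) ((List.range' (α + 2) (n - α)).map pt))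
  - (∑ α ∈ Finset.range n, ∑ β ∈ Finset.range (n - α),
      (-1 : A) ^ α * pathProd G (pt α) ((List.range α).reverse.map pt)
        * F (pt (α + 1)) (pt α)
        * pathProd S (pt (α + 1)) ((List.range' (α + 2) β).map pt)
        * F (pt (α + β + 1)) (pt (α + β + 2))
        * pathProd G (pt (α + β + 2)) ((List.range' (α + β + 3) (n - 1 - α - β)).map pt))

/-- The fermionic linear chain block
`Π_F^{(n+2)}(r;t₁,…,tₙ;s) = ∑_{α=0}^{n} S^α(r,t₁,…,t_α) F(t_α,t_{α+1}) G^{n−α}(t_{α+1},…,tₙ,s)`,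
with `t₀ := r`, `t_{n+1} := s`. -/
def PiFBlock {A X : Type*} [Ring A] (S F G : X → X → A)
    (r : X) (ts : List X) (s : X) : A :=
  let n := ts.length
  let pt : ℕ → X := fun i => (r :: (ts ++ [s])).getD i s
  ∑ α ∈ Finset.range (n + 1),
    pathProd S (pt 0) ((List.range' 1 α).map pt)
      * F (pt α) (pt (α + 1))
      * pathProd G (pt (α + 1)) ((List.range' (α + 2) (n - α)).map pt)

/-- The once-monodromy linear chain block
`Π_I^{(n+2)}(r;t₁,…,tₙ;s) = λ_I(r) G^{n+1}(r,t₁,…,tₙ,s) + ω_I(r) Π^{(n+2)}(r;t₁,…,tₙ;s)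
 − ω̂_I(r) Π_F^{(n+2)}(r;t₁,…,tₙ;s)`. -/
def PiI {A X ι : Type*} [Ring A] (P G S F : X → X → A)
    (lam om : ι → X → A) (omh : ι → X → A)
    (I : ι) (r : X) (ts : List X) (s : X) : A :=
  lam I r * pathProd G r (ts ++ [s])
    + om I r * PiBlock P G S F r ts s
    - omh I r * PiFBlock S F G r ts s

/-- The twice-monodromy linear chain block `Π_{IJ}^{(n+2)}(r;t₁,…,tₙ;s)`. -/
def PiIJ {A X ι : Type*} [Ring A] (P G S F : X → X → A)
    (lam om : ι → X → A) (omh : ι → X → A)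
    (I J : ι) (r : X) (ts : List X) (s : X) : A :=
  PiI P G S F lam om omh I r ts s * om J s
    + (-1 : A) ^ ts.length * (om I r * PiI P G S F lam om omh J s ts.reverse r)
    - om I r * PiBlock P G S F r ts s * om J s
    + omh I r * pathProd S r (ts ++ [s]) * omh J s

namespace PiProof

variable {A X : Type*} [Ring A]

/-- Last point of a path starting at `x` through `l`. -/
def lastPt : X → List X → X
  | x, [] => x
  | _, a :: l => lastPt a l

theorem lastPt_snoc (x : X) (l : List X) (a : X) : lastPt x (l ++ [a]) = a := by
  induction l generalizing x with
  | nil => rfl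
  | cons b l ih => simpa [lastPt] using ih b

theorem pathProd_snoc (f : X → X → A) (x : X) (l : List X) (y : X) :
    pathProd f x (l ++ [y]) = pathProd f x l * f (lastPt x l) y := by
  induction l generalizing x with
  | nil => simp [pathProd, lastPt]
  | cons a l ih => simp [pathProd, lastPt, ih, mul_assoc]

theorem pathProd_nil (f : X → X → A) (x : X) : pathProd f x [] = 1 := rfl

theorem pathProd_central (f : X → X → A) (hf : ∀ x y a, f x y * a = a * f x y)
    (x : X) (l : List X) (a : A) : pathProd f x l * a = a * pathProd f x l := by
  induction l generalizing x a with
  | nil => simp [pathProd]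
  | cons b l ih =>
    show f x b * pathProd f b l * a = a * (f x b * pathProd f b l)
    rw [mul_assoc, ih b a, ← mul_assoc, hf x b a, mul_assoc]

/-- pull a central element to the right -/
theorem pullc {g : A} (hc : ∀ b, g * b = b * g) (a c : A) : a * g * c = a * c * g := by
  rw [mul_assoc, hc c, ← mul_assoc]

theorem pathProd_reverse_antisymm (f : X → X → A)
    (hanti : ∀ x y, f x y = -f y x) (hc : ∀ x y a, f x y * a = a * f x y)
    (l : List X) : ∀ (x y : X),
    pathProd f x (l ++ [y]) = (-1 : A) ^ (l.length + 1) * pathProd f y (l.reverse ++ [x]) := by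
  induction l with
  | nil => intro x y; simp [pathProd, hanti x y]
  | cons a l ih =>
    intro x y
    show f x a * pathProd f a (l ++ [y]) = _
    rw [ih a y, hanti x a]
    rw [List.reverse_cons, pathProd_snoc f y (l.reverse ++ [a]) x, lastPt_snoc]
    have h1 : f a x * ((-1:A) ^ (l.length + 1) * pathProd f y (l.reverse ++ [a]))
        = (-1:A)^(l.length+1) * (pathProd f y (l.reverse ++ [a]) * f a x) := by
      rw [← mul_assoc, hc a x ((-1:A)^(l.length+1)), mul_assoc,
        pathProd_central f hc y (l.reverse ++ [a]) (f a x)]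
    rw [neg_mul, h1, List.length_cons, pow_succ]
    simp [mul_assoc, neg_mul, mul_neg, pow_succ]

theorem neg_one_pow_comm (k : ℕ) (a : A) : (-1:A)^k * a = a * (-1:A)^k :=
  ((Commute.neg_one_left a).pow_left k).eq

theorem neg_one_pow_mul_neg_one_pow (k : ℕ) : (-1:A)^k * (-1:A)^k = 1 := by
  rw [← pow_add]; exact Even.neg_one_pow ⟨k, rfl⟩

/-- shift lemma for `range'`-mapped `getD` paths -/
theorem range'_map_getD_succ (x : X) (l : List X) (d : X) (a k : ℕ) :
    (List.range' (a+1) k).map (fun i => (x :: l).getD i d)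
      = (List.range' a k).map (fun i => l.getD i d) := by
  induction k generalizing a with
  | zero => rfl
  | succ k ih =>
    rw [List.range'_succ, List.range'_succ]
    simp only [List.map_cons, List.getD_cons_succ]
    rw [ih (a+1)]

theorem range'_one_map_getD (x : X) (l : List X) (d : X) (k : ℕ) :
    (List.range' 1 k).map (fun i => (x :: l).getD i d)
      = (List.range' 0 k).map (fun i => l.getD i d) :=
  range'_map_getD_succ x l d 0 k

theorem range'_map_getD_self (l : List X) (d : X) :
    (List.range' 0 l.length).map (fun i => l.getD i d) = l := by
  induction l with
  | nil => rfl
  | cons a l ih =>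
    rw [List.length_cons, List.range'_succ]
    simp only [List.map_cons, List.getD_cons_zero, zero_add]
    rw [range'_map_getD_succ, ih]

/-- decompose the reversed-range map: `(range (α+1)).reverse.map pt = ((range α).reverse.map (pt ∘ succ)) ++ [pt 0]` -/
theorem range_reverse_map_succ (pt : ℕ → X) (α : ℕ) :
    (List.range (α+1)).reverse.map pt
      = ((List.range α).reverse.map (fun i => pt (i+1))) ++ [pt 0] := by
  rw [List.range_succ_eq_map, List.reverse_cons, List.map_append, List.map_reverse,
    List.map_reverse, List.map_map]
  simp [Function.comp, Nat.succ_eq_add_one]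

theorem lastPt_range_reverse (h : ℕ → X) (α : ℕ) :
    lastPt (h α) ((List.range α).reverse.map h) = h 0 := by
  cases α with
  | zero => rfl
  | succ β =>
    rw [range_reverse_map_succ]
    exact lastPt_snoc _ _ _

/-- the first (reversed) G-chain of a term with index `α+1` peels off `G t r`. -/
theorem revchain_peel (f : X → X → A) (pt : ℕ → X) (α : ℕ) :
    pathProd f (pt (α+1)) ((List.range (α+1)).reverse.map pt)
      = pathProd f (pt (α+1)) ((List.range α).reverse.map (fun i => pt (i+1)))
        * f (pt 1) (pt 0) := by
  rw [range_reverse_map_succ, pathProd_snoc]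
  congr 2
  have := lastPt_range_reverse (fun i => pt (i+1)) α
  simpa using this


variable (P G S F : X → X → A)

/-- recursive version of `PiFBlock` -/
def PiFR (S F G : X → X → A) : X → List X → X → A
  | r, [], s => F r s
  | r, t :: ts, s => F r t * pathProd G t (ts ++ [s]) + S r t * PiFR S F G t ts s

/-- "reversed" fermionic block, recursive -/
def PiTF (G S F : X → X → A) : X → List X → X → A
  | r, [], s => F s r
  | r, t :: ts, s => F t r * pathProd S t (ts ++ [s]) - G t r * PiTF G S F t ts s

/-- recursive version of `PiBlock` -/
def PiR (P G S F : X → X → A) : X → List X → X → A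
  | r, [], s => P r s
  | r, t :: ts, s =>
      P r t * pathProd G t (ts ++ [s]) - F t r * PiFR S F G t ts s
        - G t r * PiR P G S F t ts s


theorem Schain_peel (f : X → X → A) (x y : X) (l : List X) (d : X) (α : ℕ) :
    pathProd f ((x :: y :: l).getD 0 d)
        ((List.range' 1 (α+1)).map (fun i => (x :: y :: l).getD i d))
      = f x y * pathProd f ((y :: l).getD 0 d)
          ((List.range' 1 α).map (fun i => (y :: l).getD i d)) := by
  rw [List.range'_succ]
  simp only [List.map_cons, List.getD_cons_zero, List.getD_cons_succ, pathProd]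
  congr 2
  exact range'_map_getD_succ x (y :: l) d 1 α

theorem PiFBlock_eq (ts : List X) : ∀ (r s : X),
    PiFBlock S F G r ts s = PiFR S F G r ts s := by
  induction ts with
  | nil => intro r s; simp [PiFBlock, PiFR, pathProd]
  | cons t ts ih =>
    intro r s
    have key : PiFBlock S F G r (t::ts) s
        = F r t * pathProd G t (ts ++ [s]) + S r t * PiFBlock S F G t ts s := by
      simp only [PiFBlock, List.length_cons, List.cons_append]
      rw [Finset.sum_range_succ', Finset.mul_sum]
      refine (add_comm _ _).trans ?_
      congr 1
      · -- the α = 0 term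
        have h0 : (List.range' (0+2) (ts.length+1-0)).map
              (fun i => (r :: t :: (ts ++ [s])).getD i s) = ts ++ [s] := by
          have e1 := range'_map_getD_succ r (t :: (ts ++ [s])) s 1 (ts.length+1-0)
          have e2 := range'_map_getD_succ t (ts ++ [s]) s 0 (ts.length+1-0)
          have e3 : (List.range' 0 (ts.length+1-0)).map
                (fun i => (ts ++ [s]).getD i s) = ts ++ [s] := by
            have hl : ts.length + 1 - 0 = (ts ++ [s]).length := by simp
            rw [hl]; exact range'_map_getD_self _ _
          exact e1.trans (e2.trans e3)
        rw [h0]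
        simp [pathProd, List.range'_zero]
      · refine Finset.sum_congr rfl (fun k _ => ?_)
        rw [Schain_peel S r t (ts ++ [s]) s k]
        have h3 : (List.range' (k+1+2) (ts.length+1-(k+1))).map
              (fun i => (r :: t :: (ts ++ [s])).getD i s)
            = (List.range' (k+2) (ts.length-k)).map
              (fun i => (t :: (ts ++ [s])).getD i s) := by
          have hl : ts.length + 1 - (k+1) = ts.length - k := by omega
          rw [hl]; exact range'_map_getD_succ r (t :: (ts ++ [s])) s (k+2) (ts.length - k)
        rw [h3]
        simp only [mul_assoc]
        rfl
    rw [key, ih, PiFR]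


theorem rearr4 {g : A} (hg : ∀ b, g * b = b * g) (c C p Q : A) :
    c * -1 * (C * g) * p * Q = -g * (c * C * p * Q) := by
  rw [← mul_assoc (c * -1) C g, pullc hg, pullc hg, ← hg (c * -1 * C * p * Q)]
  simp [mul_assoc, mul_neg, neg_mul, mul_neg_one]

theorem rearr6 {g : A} (hg : ∀ b, g * b = b * g) (c C f1 sc f2 Q : A) :
    c * -1 * (C * g) * f1 * sc * f2 * Q = -g * (c * C * f1 * sc * f2 * Q) := by
  rw [← mul_assoc (c * -1) C g, pullc hg, pullc hg, pullc hg, pullc hg,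
    ← hg (c * -1 * C * f1 * sc * f2 * Q)]
  simp [mul_assoc, mul_neg, neg_mul, mul_neg_one]

theorem Pterm_peel (hGc : ∀ x y a, G x y * a = a * G x y) (r t s : X) (ts : List X) (k : ℕ) :
    (-1:A) ^ (k + 1) *
        pathProd G ((r :: t :: (ts ++ [s])).getD (k + 1) s)
          (List.map (fun i => (r :: t :: (ts ++ [s])).getD i s) (List.range (k + 1)).reverse) *
        P ((r :: t :: (ts ++ [s])).getD (k + 1) s) ((r :: t :: (ts ++ [s])).getD (k + 1 + 1) s) *
        pathProd G ((r :: t :: (ts ++ [s])).getD (k + 1 + 1) s)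
          (List.map (fun i => (r :: t :: (ts ++ [s])).getD i s)
            (List.range' (k + 1 + 2) (ts.length + 1 - (k + 1))))
      = -G t r * ((-1:A) ^ k *
          pathProd G ((t :: (ts ++ [s])).getD k s)
            (List.map (fun i => (t :: (ts ++ [s])).getD i s) (List.range k).reverse) *
          P ((t :: (ts ++ [s])).getD k s) ((t :: (ts ++ [s])).getD (k + 1) s) *
          pathProd G ((t :: (ts ++ [s])).getD (k + 1) s)
            (List.map (fun i => (t :: (ts ++ [s])).getD i s)
              (List.range' (k + 2) (ts.length - k)))) := by
  have h1 := revchain_peel G (fun i => (r :: t :: (ts ++ [s])).getD i s) k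
  simp only [List.getD_cons_succ] at h1
  have h3 : List.map (fun i => (r :: t :: (ts ++ [s])).getD i s)
        (List.range' (k + 1 + 2) (ts.length + 1 - (k + 1)))
      = List.map (fun i => (t :: (ts ++ [s])).getD i s)
        (List.range' (k + 2) (ts.length - k)) := by
    rw [show ts.length + 1 - (k + 1) = ts.length - k from by omega]
    exact range'_map_getD_succ r (t :: (ts ++ [s])) s (k+2) (ts.length - k)
  have e0 : (r :: t :: (ts ++ [s])).getD (k + 1) s = (t :: (ts ++ [s])).getD k s :=
    List.getD_cons_succ
  have e0b : (r :: t :: (ts ++ [s])).getD (k + 1 + 1) s = (t :: (ts ++ [s])).getD (k + 1) s :=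
    List.getD_cons_succ
  rw [e0, e0b, h1, h3, pow_succ]
  exact (rearr4 (fun b => hGc _ _ b) _ _ _ _).trans rfl

theorem Fterm_peel (hGc : ∀ x y a, G x y * a = a * G x y) (r t s : X) (ts : List X) (k x : ℕ) :
    (-1:A) ^ (k + 1) *
        pathProd G ((r :: t :: (ts ++ [s])).getD (k + 1) s)
          (List.map (fun i => (r :: t :: (ts ++ [s])).getD i s) (List.range (k + 1)).reverse) *
        F ((r :: t :: (ts ++ [s])).getD (k + 1 + 1) s) ((r :: t :: (ts ++ [s])).getD (k + 1) s) *
        pathProd S ((r :: t :: (ts ++ [s])).getD (k + 1 + 1) s)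
          (List.map (fun i => (r :: t :: (ts ++ [s])).getD i s) (List.range' (k + 1 + 2) x)) *
        F ((r :: t :: (ts ++ [s])).getD (k + 1 + x + 1) s) ((r :: t :: (ts ++ [s])).getD (k + 1 + x + 2) s) *
        pathProd G ((r :: t :: (ts ++ [s])).getD (k + 1 + x + 2) s)
          (List.map (fun i => (r :: t :: (ts ++ [s])).getD i s)
            (List.range' (k + 1 + x + 3) (ts.length + 1 - 1 - (k + 1) - x)))
      = -G t r * ((-1:A) ^ k *
          pathProd G ((t :: (ts ++ [s])).getD k s)
            (List.map (fun i => (t :: (ts ++ [s])).getD i s) (List.range k).reverse) *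
          F ((t :: (ts ++ [s])).getD (k + 1) s) ((t :: (ts ++ [s])).getD k s) *
          pathProd S ((t :: (ts ++ [s])).getD (k + 1) s)
            (List.map (fun i => (t :: (ts ++ [s])).getD i s) (List.range' (k + 2) x)) *
          F ((t :: (ts ++ [s])).getD (k + x + 1) s) ((t :: (ts ++ [s])).getD (k + x + 2) s) *
          pathProd G ((t :: (ts ++ [s])).getD (k + x + 2) s)
            (List.map (fun i => (t :: (ts ++ [s])).getD i s)
              (List.range' (k + x + 3) (ts.length - 1 - k - x)))) := by
  have h1 := revchain_peel G (fun i => (r :: t :: (ts ++ [s])).getD i s) k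
  simp only [List.getD_cons_succ] at h1
  have hS : List.map (fun i => (r :: t :: (ts ++ [s])).getD i s) (List.range' (k + 1 + 2) x)
      = List.map (fun i => (t :: (ts ++ [s])).getD i s) (List.range' (k + 2) x) :=
    range'_map_getD_succ r (t :: (ts ++ [s])) s (k+2) x
  have e1 : (r :: t :: (ts ++ [s])).getD (k + 1 + x + 1) s
      = (t :: (ts ++ [s])).getD (k + x + 1) s := by
    rw [show k + 1 + x + 1 = (k + x + 1) + 1 from by omega, List.getD_cons_succ]
  have e2 : (r :: t :: (ts ++ [s])).getD (k + 1 + x + 2) s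
      = (t :: (ts ++ [s])).getD (k + x + 2) s := by
    rw [show k + 1 + x + 2 = (k + x + 2) + 1 from by omega, List.getD_cons_succ]
  have hG2 : List.map (fun i => (r :: t :: (ts ++ [s])).getD i s)
        (List.range' (k + 1 + x + 3) (ts.length + 1 - 1 - (k + 1) - x))
      = List.map (fun i => (t :: (ts ++ [s])).getD i s)
        (List.range' (k + x + 3) (ts.length - 1 - k - x)) := by
    rw [show k + 1 + x + 3 = (k + x + 3) + 1 from by omega,
      show ts.length + 1 - 1 - (k + 1) - x = ts.length - 1 - k - x from by omega]
    exact range'_map_getD_succ r (t :: (ts ++ [s])) s (k+x+3) (ts.length - 1 - k - x)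
  have e0 : (r :: t :: (ts ++ [s])).getD (k + 1) s = (t :: (ts ++ [s])).getD k s :=
    List.getD_cons_succ
  have e0b : (r :: t :: (ts ++ [s])).getD (k + 1 + 1) s = (t :: (ts ++ [s])).getD (k + 1) s :=
    List.getD_cons_succ
  rw [e0, e0b, h1, hS, e1, e2, hG2, pow_succ]
  exact (rearr6 (fun b => hGc _ _ b) _ _ _ _ _ _).trans rfl

theorem P0term (r t s : X) (ts : List X) :
    (-1:A) ^ 0 *
        pathProd G ((r :: t :: (ts ++ [s])).getD 0 s)
          (List.map (fun i => (r :: t :: (ts ++ [s])).getD i s) (List.range 0).reverse) *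
        P ((r :: t :: (ts ++ [s])).getD 0 s) ((r :: t :: (ts ++ [s])).getD (0 + 1) s) *
        pathProd G ((r :: t :: (ts ++ [s])).getD (0 + 1) s)
          (List.map (fun i => (r :: t :: (ts ++ [s])).getD i s)
            (List.range' (0 + 2) (ts.length + 1 - 0)))
      = P r t * pathProd G t (ts ++ [s]) := by
  have h0 : List.map (fun i => (r :: t :: (ts ++ [s])).getD i s)
        (List.range' (0 + 2) (ts.length + 1 - 0)) = ts ++ [s] := by
    have e1 := range'_map_getD_succ r (t :: (ts ++ [s])) s 1 (ts.length + 1 - 0)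
    have e2 := range'_map_getD_succ t (ts ++ [s]) s 0 (ts.length + 1 - 0)
    have e3 : List.map (fun i => (ts ++ [s]).getD i s)
          (List.range' 0 (ts.length + 1 - 0)) = ts ++ [s] := by
      rw [show ts.length + 1 - 0 = (ts ++ [s]).length from by simp]
      exact range'_map_getD_self _ _
    exact e1.trans (e2.trans e3)
  rw [h0]
  simp [pathProd]

theorem F0term (r t s : X) (ts : List X) (x : ℕ) :
    (-1:A) ^ 0 *
        pathProd G ((r :: t :: (ts ++ [s])).getD 0 s)
          (List.map (fun i => (r :: t :: (ts ++ [s])).getD i s) (List.range 0).reverse) *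
        F ((r :: t :: (ts ++ [s])).getD (0 + 1) s) ((r :: t :: (ts ++ [s])).getD 0 s) *
        pathProd S ((r :: t :: (ts ++ [s])).getD (0 + 1) s)
          (List.map (fun i => (r :: t :: (ts ++ [s])).getD i s) (List.range' (0 + 2) x)) *
        F ((r :: t :: (ts ++ [s])).getD (0 + x + 1) s) ((r :: t :: (ts ++ [s])).getD (0 + x + 2) s) *
        pathProd G ((r :: t :: (ts ++ [s])).getD (0 + x + 2) s)
          (List.map (fun i => (r :: t :: (ts ++ [s])).getD i s)
            (List.range' (0 + x + 3) (ts.length + 1 - 1 - 0 - x)))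
      = F t r *
          (pathProd S ((t :: (ts ++ [s])).getD 0 s)
              (List.map (fun i => (t :: (ts ++ [s])).getD i s) (List.range' 1 x)) *
            F ((t :: (ts ++ [s])).getD x s) ((t :: (ts ++ [s])).getD (x + 1) s) *
            pathProd G ((t :: (ts ++ [s])).getD (x + 1) s)
              (List.map (fun i => (t :: (ts ++ [s])).getD i s)
                (List.range' (x + 2) (ts.length - x)))) := by
  have hS0 : List.map (fun i => (r :: t :: (ts ++ [s])).getD i s) (List.range' (0 + 2) x)
      = List.map (fun i => (t :: (ts ++ [s])).getD i s) (List.range' 1 x) :=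
    range'_map_getD_succ r (t :: (ts ++ [s])) s 1 x
  have e1 : (r :: t :: (ts ++ [s])).getD (0 + x + 1) s = (t :: (ts ++ [s])).getD x s := by
    rw [show 0 + x + 1 = x + 1 from by omega, List.getD_cons_succ]
  have e2 : (r :: t :: (ts ++ [s])).getD (0 + x + 2) s = (t :: (ts ++ [s])).getD (x + 1) s := by
    rw [show 0 + x + 2 = (x + 1) + 1 from by omega, List.getD_cons_succ]
  have hG0 : List.map (fun i => (r :: t :: (ts ++ [s])).getD i s)
        (List.range' (0 + x + 3) (ts.length + 1 - 1 - 0 - x))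
      = List.map (fun i => (t :: (ts ++ [s])).getD i s)
        (List.range' (x + 2) (ts.length - x)) := by
    rw [show 0 + x + 3 = (x + 2) + 1 from by omega,
      show ts.length + 1 - 1 - 0 - x = ts.length - x from by omega]
    exact range'_map_getD_succ r (t :: (ts ++ [s])) s (x+2) (ts.length - x)
  rw [hS0, e1, e2, hG0]
  simp only [pow_zero, List.range_zero, List.reverse_nil, List.map_nil, pathProd_nil,
    one_mul, mul_assoc]
  rfl

theorem PiBlock_cons (hGc : ∀ x y a, G x y * a = a * G x y)
    (r t s : X) (ts : List X) :
    PiBlock P G S F r (t::ts) s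
      = P r t * pathProd G t (ts ++ [s]) - F t r * PiFBlock S F G t ts s
        - G t r * PiBlock P G S F t ts s := by
  simp only [PiBlock, PiFBlock, List.length_cons, List.cons_append]
  conv_lhs => lhs; rw [Finset.sum_range_succ']
  conv_lhs => rhs; rw [Finset.sum_range_succ']
  conv_lhs => lhs; lhs; enter [2, k]; rw [Pterm_peel P G hGc r t s ts k]
  conv_lhs => lhs; lhs; rw [← Finset.mul_sum]
  conv_lhs => lhs; rhs; rw [P0term P G r t s ts]
  conv_lhs =>
    rhs; lhs; enter [2, k]
    rw [show Finset.range (ts.length + 1 - (k + 1)) = Finset.range (ts.length - k) from by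
      rw [Nat.succ_sub_succ]]
    enter [2, x]
    rw [Fterm_peel G S F hGc r t s ts k x]
  conv_lhs => rhs; lhs; enter [2, k]; rw [← Finset.mul_sum]
  conv_lhs => rhs; lhs; rw [← Finset.mul_sum]
  conv_lhs => rhs; rhs; rw [Nat.sub_zero]; enter [2, x]; rw [F0term G S F r t s ts x]
  conv_lhs => rhs; rhs; rw [← Finset.mul_sum]
  noncomm_ring

theorem PiBlock_eq (hGc : ∀ x y a, G x y * a = a * G x y) (ts : List X) :
    ∀ (r s : X), PiBlock P G S F r ts s = PiR P G S F r ts s := by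
  induction ts with
  | nil => intro r s; simp [PiBlock, PiR, pathProd]
  | cons t ts ih =>
    intro r s
    rw [PiBlock_cons P G S F hGc, ih, PiFBlock_eq]
    simp [PiR]

theorem PiFR_snoc (t s : X) : ∀ (ts : List X) (r : X),
    PiFR S F G r (ts ++ [t]) s
      = PiFR S F G r ts t * G t s + pathProd S r (ts ++ [t]) * F t s := by
  intro ts
  induction ts with
  | nil => intro r; simp [PiFR, pathProd, mul_assoc]
  | cons a l ih =>
    intro r
    show F r a * pathProd G a ((l ++ [t]) ++ [s]) + S r a * PiFR S F G a (l ++ [t]) s = _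
    rw [pathProd_snoc G a (l ++ [t]) s, lastPt_snoc, ih a]
    show _ = (F r a * pathProd G a (l ++ [t]) + S r a * PiFR S F G a l t) * G t s
        + (S r a * pathProd S a (l ++ [t])) * F t s
    noncomm_ring

theorem PiTF_snoc (hGc : ∀ x y a, G x y * a = a * G x y) (t s : X) : ∀ (ts : List X) (r : X),
    PiTF G S F r (ts ++ [t]) s
      = PiTF G S F r ts t * S t s
        + (-1:A)^(ts.length+1) * (pathProd G t (ts.reverse ++ [r]) * F s t) := by
  intro ts
  induction ts with
  | nil =>
    intro r
    show F t r * pathProd S t ([] ++ [s]) - G t r * F s t = _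
    simp only [List.nil_append, List.reverse_nil, List.length_nil, pow_one]
    show _ = F t r * S t s + (-1:A)^(0+1) * (pathProd G t [r] * F s t)
    simp only [pathProd, pathProd_nil, mul_one, pow_one]
    noncomm_ring
  | cons a l ih =>
    intro r
    show F a r * pathProd S a ((l ++ [t]) ++ [s]) - G a r * PiTF G S F a (l ++ [t]) s = _
    rw [pathProd_snoc S a (l ++ [t]) s, lastPt_snoc, ih a]
    rw [List.reverse_cons, List.length_cons, pathProd_snoc G t (l.reverse ++ [a]) r,
      lastPt_snoc]
    show _ = (F a r * pathProd S a (l ++ [t]) - G a r * PiTF G S F a l t) * S t s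
        + (-1:A)^(l.length+1+1) * (pathProd G t (l.reverse ++ [a]) * G a r * F s t)
    have hc : G a r * ((-1:A)^(l.length+1) * (pathProd G t (l.reverse ++ [a]) * F s t))
        = (-1:A)^(l.length+1) * (pathProd G t (l.reverse ++ [a]) * G a r * F s t) := by
      rw [← mul_assoc, ← neg_one_pow_comm (l.length+1) (G a r), mul_assoc,
        ← mul_assoc (G a r) _ (F s t), hGc a r (pathProd G t (l.reverse ++ [a]))]
    rw [mul_add (G a r), hc, pow_succ]
    noncomm_ring

theorem PiR_snoc (hGc : ∀ x y a, G x y * a = a * G x y) (t s : X) : ∀ (ts : List X) (r : X),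
    PiR P G S F r (ts ++ [t]) s
      = PiR P G S F r ts t * G t s
        + (-1:A)^(ts.length+1) * (pathProd G t (ts.reverse ++ [r]) * P t s)
        - PiTF G S F r ts t * F t s := by
  intro ts
  induction ts with
  | nil =>
    intro r
    show P r t * pathProd G t ([] ++ [s]) - F t r * F t s - G t r * P t s = _
    show _ = P r t * G t s + (-1:A)^(0+1) * (pathProd G t [r] * P t s) - F t r * F t s
    simp only [List.nil_append, pathProd, pathProd_nil, mul_one, pow_one]
    noncomm_ring
  | cons a l ih =>
    intro r
    show P r a * pathProd G a ((l ++ [t]) ++ [s]) - F a r * PiFR S F G a (l ++ [t]) s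
        - G a r * PiR P G S F a (l ++ [t]) s = _
    rw [pathProd_snoc G a (l ++ [t]) s, lastPt_snoc, PiFR_snoc G S F t s l a, ih a]
    rw [List.reverse_cons, List.length_cons, pathProd_snoc G t (l.reverse ++ [a]) r,
      lastPt_snoc]
    show _ = (P r a * pathProd G a (l ++ [t]) - F a r * PiFR S F G a l t
          - G a r * PiR P G S F a l t) * G t s
        + (-1:A)^(l.length+1+1) * (pathProd G t (l.reverse ++ [a]) * G a r * P t s)
        - (F a r * pathProd S a (l ++ [t]) - G a r * PiTF G S F a l t) * F t s
    have hc : G a r * ((-1:A)^(l.length+1) * (pathProd G t (l.reverse ++ [a]) * P t s))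
        = (-1:A)^(l.length+1) * (pathProd G t (l.reverse ++ [a]) * G a r * P t s) := by
      rw [← mul_assoc, ← neg_one_pow_comm (l.length+1) (G a r), mul_assoc,
        ← mul_assoc (G a r) _ (P t s), hGc a r (pathProd G t (l.reverse ++ [a]))]
    rw [mul_sub (G a r), mul_add (G a r), hc, pow_succ]
    noncomm_ring

theorem F_anticomm_PiFR (hGc : ∀ x y a, G x y * a = a * G x y)
    (hSc : ∀ x y a, S x y * a = a * S x y)
    (hFodd : ∀ x y z w, F x y * F z w = -(F z w * F x y))
    (x y : X) : ∀ (ts : List X) (r s : X),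
    F x y * PiFR S F G r ts s = -(PiFR S F G r ts s * F x y) := by
  intro ts
  induction ts with
  | nil => intro r s; exact hFodd x y r s
  | cons t l ih =>
    intro r s
    show F x y * (F r t * pathProd G t (l ++ [s]) + S r t * PiFR S F G t l s) = _
    show _ = -((F r t * pathProd G t (l ++ [s]) + S r t * PiFR S F G t l s) * F x y)
    have h1 : F x y * (F r t * pathProd G t (l ++ [s]))
        = -(F r t * pathProd G t (l ++ [s]) * F x y) := by
      rw [← mul_assoc, hFodd x y r t, neg_mul, mul_assoc,
        ← pathProd_central G hGc t (l ++ [s]) (F x y), ← mul_assoc]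
    have h2 : F x y * (S r t * PiFR S F G t l s)
        = -(S r t * PiFR S F G t l s * F x y) := by
      rw [← mul_assoc, ← hSc r t (F x y), mul_assoc, ih t s, mul_neg, mul_assoc]
    rw [mul_add, h1, h2, add_mul, neg_add]

theorem PiFR_reflect (hGc : ∀ x y a, G x y * a = a * G x y)
    (hSc : ∀ x y a, S x y * a = a * S x y)
    (hSanti : ∀ x y, S x y = -S y x) :
    ∀ (ts : List X) (r s : X),
    PiFR S F G r ts s = (-1:A)^ts.length * PiTF G S F s ts.reverse r := by
  intro ts
  induction ts with
  | nil => intro r s; simp [PiFR, PiTF]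
  | cons t l ih =>
    intro r s
    rw [List.reverse_cons, PiTF_snoc G S F hGc t r l.reverse s, List.reverse_reverse,
      List.length_reverse, List.length_cons]
    show F r t * pathProd G t (l ++ [s]) + S r t * PiFR S F G t l s = _
    rw [ih t s]
    have e1 : (-1:A)^(l.length+1) * ((-1:A)^(l.length+1) * (pathProd G t (l ++ [s]) * F r t))
        = F r t * pathProd G t (l ++ [s]) := by
      rw [← mul_assoc, neg_one_pow_mul_neg_one_pow, one_mul,
        ← pathProd_central G hGc t (l ++ [s]) (F r t)]
    have e2 : (-1:A)^(l.length+1) * (PiTF G S F s l.reverse t * S t r)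
        = S r t * ((-1:A)^l.length * PiTF G S F s l.reverse t) := by
      rw [hSanti t r, mul_neg, ← hSc r t (PiTF G S F s l.reverse t), pow_succ,
        ← mul_assoc (S r t), hSc r t ((-1:A)^l.length)]
      simp [mul_assoc, mul_neg, neg_mul, neg_neg]
    rw [mul_add, e1, e2]
    exact add_comm _ _

theorem PiR_reflect (hGc : ∀ x y a, G x y * a = a * G x y)
    (hSc : ∀ x y a, S x y * a = a * S x y)
    (hPc : ∀ x y a, P x y * a = a * P x y)
    (hSanti : ∀ x y, S x y = -S y x)
    (hPsymm : ∀ x y, P x y = P y x)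
    (hFodd : ∀ x y z w, F x y * F z w = -(F z w * F x y)) :
    ∀ (ts : List X) (r s : X),
    PiR P G S F r ts s = (-1:A)^ts.length * PiR P G S F s ts.reverse r := by
  intro ts
  induction ts with
  | nil => intro r s; simpa [PiR] using hPsymm r s
  | cons t l ih =>
    intro r s
    rw [List.reverse_cons, PiR_snoc P G S F hGc t r l.reverse s, List.reverse_reverse,
      List.length_reverse, List.length_cons]
    show P r t * pathProd G t (l ++ [s]) - F t r * PiFR S F G t l s
        - G t r * PiR P G S F t l s = _
    have e1 : (-1:A)^(l.length+1) * ((-1:A)^(l.length+1) * (pathProd G t (l ++ [s]) * P t r))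
        = P r t * pathProd G t (l ++ [s]) := by
      rw [← mul_assoc, neg_one_pow_mul_neg_one_pow, one_mul,
        pathProd_central G hGc t (l ++ [s]) (P t r), hPsymm t r]
    have e2 : (-1:A)^(l.length+1) * (PiR P G S F s l.reverse t * G t r)
        = -(G t r * PiR P G S F t l s) := by
      rw [ih t s, ← hGc t r (PiR P G S F s l.reverse t), pow_succ, ← mul_assoc (G t r),
        hGc t r ((-1:A)^l.length)]
      simp [mul_assoc, neg_mul, mul_neg]
    have e3 : (-1:A)^(l.length+1) * (PiTF G S F s l.reverse t * F t r)
        = F t r * PiFR S F G t l s := by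
      rw [F_anticomm_PiFR G S F hGc hSc hFodd t r l t s,
        PiFR_reflect G S F hGc hSc hSanti l t s, pow_succ]
      simp [mul_assoc, neg_mul, mul_neg, neg_neg]
    rw [mul_sub, mul_add, e1, e2, e3]
    noncomm_ring

theorem final_alg (c u v q σ oI oJ hI hJ p τ : A)
    (hcc : c * c = 1) (hccomm : ∀ a, c * a = a * c)
    (hoI : ∀ a, oI * a = a * oI) (hoJ : ∀ a, oJ * a = a * oJ)
    (hσ : ∀ a, σ * a = a * σ)
    (hIJ : hI * hJ = -(hJ * hI))
    (hp : p = c * q) (hτ : τ = c * -1 * σ) :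
    u * oJ + c * (oI * v) - oI * p * oJ + hI * σ * hJ
      = c * (v * oI + c * (oJ * u) - oJ * q * oI + hJ * τ * hI) := by
  subst hp; subst hτ
  have h1 : c * (c * (oJ * u)) = u * oJ := by rw [← mul_assoc, hcc, one_mul, hoJ u]
  have h2 : c * (v * oI) = c * (oI * v) := by rw [hoI v]
  have h3 : c * (oJ * q * oI) = oI * (c * q) * oJ := by
    calc c * (oJ * q * oI) = c * (oI * (oJ * q)) := by rw [← hoI (oJ * q)]
      _ = c * (oI * (q * oJ)) := by rw [hoJ q]
      _ = oI * (c * q) * oJ := by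
          rw [← mul_assoc c oI, hccomm oI, mul_assoc oI c, ← mul_assoc c q oJ,
            ← mul_assoc oI (c * q) oJ]
  have hJI : hJ * hI = -(hI * hJ) := by rw [hIJ, neg_neg]
  have h4 : c * (hJ * (c * -1 * σ) * hI) = hI * σ * hJ := by
    have e1 : hJ * (c * -1 * σ) = -(c * (σ * hJ)) := by
      rw [mul_neg_one, neg_mul, mul_neg, ← mul_assoc, ← hccomm hJ, mul_assoc, ← hσ hJ]
    rw [e1, neg_mul, mul_neg, mul_assoc c (σ * hJ) hI, ← mul_assoc c c _, hcc, one_mul,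
      mul_assoc σ hJ hI, hJI, mul_neg, neg_neg, ← mul_assoc, hσ hI]
  rw [mul_add c (v * oI + c * (oJ * u) - oJ * q * oI) (hJ * (c * -1 * σ) * hI),
    mul_sub c (v * oI + c * (oJ * u)) (oJ * q * oI),
    mul_add c (v * oI) (c * (oJ * u)), h1, h2, h3, h4]
  noncomm_ring

end PiProof


/-- reflection symmetry of the doubly-indexed chain block:
`Π_{IJ}^{(n+2)}(r;t₁,…,tₙ;s) = (−1)ⁿ Π_{JI}^{(n+2)}(s;tₙ,…,t₁;r)`, in a ℤ/2-graded
commutative ring with `P, G, S, λ_I, ω_I` even (central), `P` symmetric, `S`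
antisymmetric, and `F`, `ω̂_I` odd (all odd values pairwise anticommute). -/
theorem PiIJ_reflection {A X ι : Type*} [Ring A] (P G S F : X → X → A)
    (lam om : ι → X → A) (omh : ι → X → A)
    (hPsymm : ∀ x y, P x y = P y x)
    (hSanti : ∀ x y, S x y = -S y x)
    (hPcentral : ∀ x y a, P x y * a = a * P x y)
    (hGcentral : ∀ x y a, G x y * a = a * G x y)
    (hScentral : ∀ x y a, S x y * a = a * S x y)
    (hlamcentral : ∀ I x a, lam I x * a = a * lam I x)
    (homcentral : ∀ I x a, om I x * a = a * om I x)
    (hFodd : ∀ x y z w, F x y * F z w = -(F z w * F x y))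
    (homhodd : ∀ I x J y, omh I x * omh J y = -(omh J y * omh I x))
    (homhF : ∀ I x z w, omh I x * F z w = -(F z w * omh I x))
    (hFomh : ∀ z w I x, F z w * omh I x = -(omh I x * F z w))
    (I J : ι) (r s : X) (ts : List X) :
    PiIJ P G S F lam om omh I J r ts s
      = (-1 : A) ^ ts.length * PiIJ P G S F lam om omh J I s ts.reverse r := by
  simp only [PiIJ, List.length_reverse, List.reverse_reverse]
  rw [PiProof.PiBlock_eq P G S F hGcentral ts r s,
    PiProof.PiBlock_eq P G S F hGcentral ts.reverse s r]
  have ht : pathProd S s (ts.reverse ++ [r])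
      = (-1:A)^ts.length * -1 * pathProd S r (ts ++ [s]) := by
    have h := PiProof.pathProd_reverse_antisymm S hSanti hScentral ts.reverse s r
    rw [List.reverse_reverse, List.length_reverse, pow_succ] at h
    exact h
  refine PiProof.final_alg _ _ _ _ _ (om I r) (om J s) (omh I r) (omh J s) _ _
    (PiProof.neg_one_pow_mul_neg_one_pow ts.length)
    (fun a => PiProof.neg_one_pow_comm ts.length a)
    (fun a => homcentral I r a) (fun a => homcentral J s a)
    (fun a => PiProof.pathProd_central S hScentral r (ts ++ [s]) a)
    (homhodd I r J s)
    (PiProof.PiR_reflect P G S F hGcentral hScentral hPcentral hSanti hPsymm hFodd ts r s)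
    ht
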